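/- arXiv:2107.12121 — 2 statements merged into one kernel-verified Lean document; each statement's English description precedes it below -/
import Mathlib

section
/- Let m, n ≥ 2 be coprime and let a_k(m) denote the k-th base-n digit of 1/m. Then m · a_k(m) ≡ −[n^k]_m (mod n) for all k ≥ 1, where [n^k]_m is the least positive residue of n^k modulo m. -/
/-- Least positive residue of `g` modulo `m`. -/
def lpr (g m : ℕ) : ℕ := if g % m = 0 then m else g % m

/-- The `k`-th digit of the base-`n` expansion of `1/m`, via the least positive
residue formula `a_k = (n·[n^{k−1}]_m − [n^k]_m)/m`. -/
def baseDigit (n m k : ℕ) : ℕ := (n * lpr (n ^ (k - 1)) m - lpr (n ^ k) m) / m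

theorem digit_congruence (m n : ℕ) (hm : 2 ≤ m) (hn : 2 ≤ n)
    (hco : Nat.Coprime m n) (k : ℕ) (hk : 1 ≤ k) :
    (m * baseDigit n m k : ℤ) ≡ -(lpr (n ^ k) m : ℤ) [ZMOD n] := by
  have hm0 : 0 < m := by omega
  have hmod : ∀ j : ℕ, n ^ j % m ≠ 0 := by
    intro j h
    have hd : m ∣ n ^ j := Nat.dvd_of_mod_eq_zero h
    have : m = 1 := Nat.Coprime.eq_one_of_dvd (hco.pow_right j) hd
    omega
  have h1 : lpr (n ^ (k - 1)) m = n ^ (k - 1) % m := by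
    simp [lpr, hmod (k - 1)]
  have h2 : lpr (n ^ k) m = n ^ k % m := by
    simp [lpr, hmod k]
  set r1 := n ^ (k - 1) % m with hr1
  set r2 := n ^ k % m with hr2
  have hpow : n * n ^ (k - 1) = n ^ k := by
    rw [← pow_succ']
    congr 1
    omega
  have hkey : (n * r1) % m = r2 := by
    rw [hr1, hr2, ← hpow]
    simp [Nat.mul_mod]
  have hle : r2 ≤ n * r1 := hkey ▸ Nat.mod_le _ _
  have hr2lt : r2 < m := Nat.mod_lt _ hm0
  have hmeq : r2 % m = (n * r1) % m := by
    rw [hkey, Nat.mod_eq_of_lt hr2lt]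
  have hdvd : m ∣ n * r1 - r2 := (Nat.modEq_iff_dvd' hle).mp hmeq
  have hmul : m * baseDigit n m k = n * r1 - r2 := by
    rw [baseDigit, h1, h2, Nat.mul_div_cancel' hdvd]
  have hcast : (m * baseDigit n m k : ℤ) = (n : ℤ) * r1 - r2 := by
    rw [← Nat.cast_mul, hmul, Nat.cast_sub hle]
    push_cast
    ring
  have hsub : (-(lpr (n ^ k) m : ℤ)) - (m * baseDigit n m k : ℤ) = -((n : ℤ) * r1) := by
    rw [hcast, h2]
    push_cast
    ring
  exact Int.ModEq.symm (Int.modEq_iff_dvd.mpr (hsub ▸ (dvd_neg.mpr ⟨(r1 : ℤ), rfl⟩))) |>.symm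
end

section
/- Let m be an odd prime and n ≥ 2 coprime to m. Then n is a primitive root modulo m if and only if the integer α = (n^{m−1} − 1)/m is not periodic in base n with any period ℓ properly dividing m−1; precisely, n is a primitive root mod m iff there is no proper divisor ℓ of m−1 such that (n^{m−1} − 1)/(n^ℓ − 1) divides α. -/
lemma div_dvd_div_iff_key (N A m : ℕ) (hA : 0 < A) (hN : 0 < N) (hAN : A ∣ N)
    (hmN : m ∣ N) : N / A ∣ N / m ↔ m ∣ A := by
  have hB : 0 < N / A := Nat.div_pos (Nat.le_of_dvd hN hAN) hA
  have hm0 : 0 < m := Nat.pos_of_dvd_of_pos hmN hN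
  constructor
  · rintro ⟨c, hc⟩
    refine ⟨c, ?_⟩
    have h1 : N = m * (N / A * c) := by rw [← hc, Nat.mul_div_cancel' hmN]
    have h2 : N = A * (N / A) := (Nat.mul_div_cancel' hAN).symm
    have h3 : A * (N / A) = m * c * (N / A) := by
      calc A * (N / A) = N := h2.symm
      _ = m * (N / A * c) := h1
      _ = m * c * (N / A) := by ring
    exact Nat.eq_of_mul_eq_mul_right hB h3
  · rintro ⟨c, hc⟩
    refine ⟨c, ?_⟩
    have h2 : N = m * c * (N / A) := by rw [← hc]; exact (Nat.mul_div_cancel' hAN).symm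
    calc N / m = m * (c * (N / A)) / m := by rw [← mul_assoc, ← h2]
    _ = c * (N / A) := Nat.mul_div_cancel_left _ hm0
    _ = N / A * c := mul_comm _ _

theorem primitive_root_iff_nonperiodic (m n : ℕ) (hm : m.Prime) (hmo : Odd m)
    (hn : 2 ≤ n) (hco : Nat.Coprime m n) :
    orderOf (n : ZMod m) = m - 1 ↔
      ¬ ∃ ℓ : ℕ, ℓ ∣ m - 1 ∧ ℓ < m - 1 ∧
        ((n ^ (m - 1) - 1) / (n ^ ℓ - 1)) ∣ ((n ^ (m - 1) - 1) / m) := by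
  haveI : Fact m.Prime := ⟨hm⟩
  have hm1 : 0 < m - 1 := by have := hm.two_le; omega
  have hn0 : (n : ZMod m) ≠ 0 := by
    rw [Ne, ZMod.natCast_eq_zero_iff]
    intro h
    exact hm.one_lt.ne' (Nat.Coprime.eq_one_of_dvd hco h)
  have hferm : (n : ZMod m) ^ (m - 1) = 1 := ZMod.pow_card_sub_one_eq_one hn0
  set d := orderOf (n : ZMod m) with hd
  have hdord : d ∣ m - 1 := orderOf_dvd_of_pow_eq_one hferm
  have hdpos : 0 < d := by
    rcases Nat.eq_zero_or_pos d with h | h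
    · rw [h] at hdord; simp at hdord; omega
    · exact h
  have hpow_iff : ∀ ℓ : ℕ, m ∣ n ^ ℓ - 1 ↔ d ∣ ℓ := by
    intro ℓ
    have h1 : 1 ≤ n ^ ℓ := Nat.one_le_pow _ _ (by omega)
    rw [← Nat.modEq_iff_dvd' h1]
    constructor
    · intro h
      have h2 : ((1 : ℕ) : ZMod m) = ((n ^ ℓ : ℕ) : ZMod m) :=
        (ZMod.natCast_eq_natCast_iff _ _ _).mpr h
      push_cast at h2
      exact orderOf_dvd_of_pow_eq_one h2.symm
    · intro h
      have h2 : (n : ZMod m) ^ ℓ = 1 := orderOf_dvd_iff_pow_eq_one.mp h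
      rw [← ZMod.natCast_eq_natCast_iff]
      push_cast
      exact h2.symm
  have hNpos : 0 < n ^ (m - 1) - 1 := by
    have : n ≤ n ^ (m - 1) := Nat.le_self_pow (by omega) n
    omega
  have hmN : m ∣ n ^ (m - 1) - 1 := (hpow_iff (m - 1)).mpr hdord
  have hAN : ∀ ℓ : ℕ, ℓ ∣ m - 1 → n ^ ℓ - 1 ∣ n ^ (m - 1) - 1 := by
    rintro ℓ ⟨t, ht⟩
    have := Nat.sub_dvd_pow_sub_pow (n ^ ℓ) 1 t
    simpa [← pow_mul, ← ht] using this
  have hApos : ∀ ℓ : ℕ, 0 < ℓ → 0 < n ^ ℓ - 1 := by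
    intro ℓ hℓ
    have : n ≤ n ^ ℓ := Nat.le_self_pow (by omega) n
    omega
  constructor
  · intro hord
    rintro ⟨ℓ, hℓdvd, hℓlt, hdiv⟩
    have hℓpos : 0 < ℓ := Nat.pos_of_dvd_of_pos hℓdvd hm1
    have hmA : m ∣ n ^ ℓ - 1 :=
      (div_dvd_div_iff_key _ _ _ (hApos ℓ hℓpos) hNpos (hAN ℓ hℓdvd) hmN).mp hdiv
    have : d ∣ ℓ := (hpow_iff ℓ).mp hmA
    rw [hord] at this
    exact absurd (Nat.le_of_dvd hℓpos this) (by omega)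
  · intro hnot
    by_contra hne
    apply hnot
    refine ⟨d, hdord, lt_of_le_of_ne (Nat.le_of_dvd hm1 hdord) hne, ?_⟩
    exact (div_dvd_div_iff_key _ _ _ (hApos d hdpos) hNpos (hAN d hdord) hmN).mpr
      ((hpow_iff d).mpr dvd_rfl)
end
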